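/- Let A : ℝⁿ → ℝᵐ be a linear map, let α > 0, and let R : ℝⁿ → ℝ be a continuous, m-strongly convex function for some m > 0. For y ∈ ℝᵐ let u(y, α) denote the unique minimizer of F_{y,α}(u) = ‖Au − y‖² + α·R(u). Then the map y ↦ u(y, α) is continuous: for every sequence y_k → y in ℝᵐ one has u(y_k, α) → u(y, α) in ℝⁿ. -/

import Mathlib

open Filter Topology

section Aux

variable {E : Type*} [NormedAddCommGroup E] [InnerProductSpace ℝ E]

/-- Midpoint norm-square identity (parallelogram law). -/
lemma midsq_aux (u v : E) :
    ‖(1/2 : ℝ) • u + (1/2 : ℝ) • v‖ ^ 2 = (‖u‖ ^ 2 + ‖v‖ ^ 2) / 2 - ‖u - v‖ ^ 2 / 4 := by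
  have h1 : (1/2 : ℝ) • u + (1/2 : ℝ) • v = (1/2 : ℝ) • (u + v) := by module
  rw [h1, norm_smul]
  have h2 := norm_add_sq_real u v
  have h3 := norm_sub_sq_real u v
  have h4 : ‖(1/2 : ℝ)‖ = 1/2 := by norm_num
  rw [h4, mul_pow]
  nlinarith [h2, h3]

/-- Cross-term identity. -/
lemma cross_aux (a b y y' : E) :
    ‖a - y‖ ^ 2 - ‖a - y'‖ ^ 2 - ‖b - y‖ ^ 2 + ‖b - y'‖ ^ 2
      = 2 * (inner ℝ (a - b) (y' - y) : ℝ) := by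
  simp only [norm_sub_sq_real, inner_sub_left, inner_sub_right]
  ring

end Aux

set_option maxHeartbeats 1600000 in
/-- **Stability of variational regularization.** With `A` linear, `α > 0`, `R`
continuous and `m`-strongly convex, let `sol y` denote the (unique) minimizer of
`F_{y,α}(u) = ‖Au − y‖² + α R(u)`. Then `y ↦ sol y` is sequentially continuous:
for every sequence `y_k → y` we have `sol y_k → sol y`. -/
theorem stmt1 {n m' : ℕ}
    (A : EuclideanSpace ℝ (Fin n) →ₗ[ℝ] EuclideanSpace ℝ (Fin m'))
    (α : ℝ) (hα : 0 < α)
    (R : EuclideanSpace ℝ (Fin n) → ℝ) (m : ℝ) (hm : 0 < m)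
    (hRcont : Continuous R)
    (hRsc : ConvexOn ℝ Set.univ (fun u => R u - (m / 2) * ‖u‖ ^ 2))
    (sol : EuclideanSpace ℝ (Fin m') → EuclideanSpace ℝ (Fin n))
    (hsol : ∀ y : EuclideanSpace ℝ (Fin m'),
      ∀ u : EuclideanSpace ℝ (Fin n),
        ‖A (sol y) - y‖ ^ 2 + α * R (sol y) ≤ ‖A u - y‖ ^ 2 + α * R u) :
    ∀ (yk : ℕ → EuclideanSpace ℝ (Fin m')) (y : EuclideanSpace ℝ (Fin m')),
      Tendsto yk atTop (𝓝 y) →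
      Tendsto (fun k => sol (yk k)) atTop (𝓝 (sol y)) := by
  intro yk y hy
  -- the continuous version of A, for the operator norm bound
  obtain ⟨C, hC0, hCb⟩ : ∃ C : ℝ, 0 ≤ C ∧ ∀ x, ‖A x‖ ≤ C * ‖x‖ := by
    refine ⟨‖LinearMap.toContinuousLinearMap A‖, norm_nonneg _, fun x => ?_⟩
    have h := (LinearMap.toContinuousLinearMap A).le_opNorm x
    rwa [LinearMap.coe_toContinuousLinearMap'] at h
  -- Key quantitative optimality: strong convexity around the minimizer
  have key : ∀ (z : EuclideanSpace ℝ (Fin m')) (u : EuclideanSpace ℝ (Fin n)),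
      ‖A (sol z) - z‖ ^ 2 + α * R (sol z) + (α * m / 4) * ‖u - sol z‖ ^ 2
        ≤ ‖A u - z‖ ^ 2 + α * R u := by
    intro z u
    set s := sol z with hs
    have hmid := hRsc.2 (Set.mem_univ u) (Set.mem_univ s)
      (by norm_num : (0:ℝ) ≤ 1/2) (by norm_num : (0:ℝ) ≤ 1/2) (by norm_num)
    simp only [smul_eq_mul] at hmid
    have hms := midsq_aux u s
    have hAmid : A ((1/2 : ℝ) • u + (1/2 : ℝ) • s) - z
        = (1/2 : ℝ) • (A u - z) + (1/2 : ℝ) • (A s - z) := by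
      rw [map_add, map_smul, map_smul]; module
    have hA2 : ‖A ((1/2 : ℝ) • u + (1/2 : ℝ) • s) - z‖ ^ 2
        = (‖A u - z‖ ^ 2 + ‖A s - z‖ ^ 2) / 2 - ‖(A u - z) - (A s - z)‖ ^ 2 / 4 := by
      rw [hAmid, midsq_aux]
    have hopt := hsol z ((1/2 : ℝ) • u + (1/2 : ℝ) • s)
    rw [← hs] at hopt
    have h1 := mul_le_mul_of_nonneg_left hmid hα.le
    rw [hms] at h1
    nlinarith [sq_nonneg ‖(A u - z) - (A s - z)‖, hα.le, hm.le, h1, hopt, hA2]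
  -- Quantitative stability bound
  have bound : ∀ k, ‖sol (yk k) - sol y‖ ≤ (4 * C / (α * m)) * ‖yk k - y‖ := by
    intro k
    set u := sol (yk k) with hu
    set s := sol y with hs
    clear_value u s
    have k1 := key y u
    have k2 := key (yk k) s
    rw [← hs] at k1
    rw [← hu] at k2
    have hrev : ‖s - u‖ = ‖u - s‖ := norm_sub_rev _ _
    rw [hrev] at k2
    -- sum up
    have hcross := cross_aux (A u) (A s) y (yk k)
    have hinner : (inner ℝ (A u - A s) (yk k - y) : ℝ)
        ≤ C * ‖u - s‖ * ‖yk k - y‖ := by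
      calc (inner ℝ (A u - A s) (yk k - y) : ℝ)
          ≤ ‖A u - A s‖ * ‖yk k - y‖ := real_inner_le_norm _ _
        _ = ‖A (u - s)‖ * ‖yk k - y‖ := by rw [map_sub]
        _ ≤ (C * ‖u - s‖) * ‖yk k - y‖ :=
            mul_le_mul_of_nonneg_right (hCb _) (norm_nonneg _)
        _ = C * ‖u - s‖ * ‖yk k - y‖ := by ring
    have hd0 : (0:ℝ) ≤ ‖u - s‖ := norm_nonneg _
    have he0 : (0:ℝ) ≤ ‖yk k - y‖ := norm_nonneg _
    -- (α m / 2) d² ≤ 2 C d ε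
    have hmain : (α * m / 2) * ‖u - s‖ ^ 2 ≤ 2 * (C * ‖u - s‖ * ‖yk k - y‖) := by
      nlinarith [k1, k2, hcross, hinner]
    have ham : 0 < α * m := mul_pos hα hm
    rcases eq_or_lt_of_le hd0 with hdeq | hdpos
    · rw [← hdeq]
      positivity
    · have h2 : (α * m / 2) * ‖u - s‖ ≤ 2 * (C * ‖yk k - y‖) := by
        have := mul_le_mul_of_nonneg_right hmain (le_of_lt (inv_pos.mpr hdpos))
        calc (α * m / 2) * ‖u - s‖
            = (α * m / 2) * ‖u - s‖ ^ 2 * (‖u - s‖)⁻¹ := by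
              field_simp
          _ ≤ 2 * (C * ‖u - s‖ * ‖yk k - y‖) * (‖u - s‖)⁻¹ := this
          _ = 2 * (C * ‖yk k - y‖) := by field_simp
      rw [div_mul_eq_mul_div, le_div_iff₀ ham]
      nlinarith [h2, he0, hC0]
  -- conclude by squeezing
  have hnorm : Tendsto (fun k => yk k - y) atTop (𝓝 0) :=
    tendsto_sub_nhds_zero_iff.mpr hy
  have hlim : Tendsto (fun k => (4 * C / (α * m)) * ‖yk k - y‖) atTop (𝓝 0) := by
    have h0 : Tendsto (fun k => ‖yk k - y‖) atTop (𝓝 0) := by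
      simpa using hnorm.norm
    have := h0.const_mul (4 * C / (α * m))
    simpa using this
  have hfin : Tendsto (fun k => sol (yk k) - sol y) atTop (𝓝 0) :=
    squeeze_zero_norm bound hlim
  exact tendsto_sub_nhds_zero_iff.mp hfin
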